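/- arXiv:2105.05286 — 4 statements merged into one kernel-verified Lean document; each statement's English description precedes it below -/
import Mathlib

section
/- Let G be a simple graph on n vertices such that every two vertices of degree less than Δ(G) are adjacent in G. Then the number of vertices of degree Δ(G) is strictly greater than n/2. -/
open SimpleGraph

/-- If every two vertices of degree less than `Δ(G)` are adjacent in `G`, then more than half
of the vertices of `G` have degree `Δ(G)`. -/
theorem card_maxDegree_vertices_gt_half (V : Type) [Fintype V] [DecidableEq V] [Nonempty V]
    (G : SimpleGraph V) [DecidableRel G.Adj]
    (h : ∀ u v : V, u ≠ v → G.degree u < G.maxDegree → G.degree v < G.maxDegree → G.Adj u v) :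
    ((Finset.univ.filter fun v : V => G.degree v = G.maxDegree).card : ℝ) >
      (Fintype.card V : ℝ) / 2 := by
  classical
  set Δ := G.maxDegree with hΔdef
  set T := Finset.univ.filter fun v : V => G.degree v = Δ with hTdef
  set S := Finset.univ.filter fun v : V => ¬ (G.degree v = Δ) with hSdef
  have hst : T.card + S.card = Fintype.card V := by
    rw [hTdef, hSdef]
    exact Finset.card_filter_add_card_filter_not _
  have hSlt : ∀ u ∈ S, G.degree u < Δ := by
    intro u hu
    rw [hSdef, Finset.mem_filter] at hu
    exact lt_of_le_of_ne (G.degree_le_maxDegree u) hu.2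
  obtain ⟨w0, hw0⟩ := G.exists_maximal_degree_vertex
  have hT1 : 1 ≤ T.card := Finset.card_pos.mpr ⟨w0, by simp [hTdef, hw0.symm, hΔdef]⟩
  suffices hts : S.card < T.card by
    have h2t : Fintype.card V < 2 * T.card := by omega
    rw [gt_iff_lt, div_lt_iff₀ (by norm_num : (0:ℝ) < 2)]
    calc ((Fintype.card V : ℕ) : ℝ) < ((2 * T.card : ℕ) : ℝ) := by exact_mod_cast h2t
      _ = (T.card : ℝ) * 2 := by push_cast; ring
  by_contra hc
  push_neg at hc
  have hS1 : 1 ≤ S.card := le_trans hT1 hc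
  obtain ⟨u0, hu0⟩ := Finset.card_pos.mp hS1
  -- For u ∈ S, the neighbors of u inside S are exactly S.erase u
  have hNS : ∀ u ∈ S, (G.neighborFinset u).filter (· ∈ S) = S.erase u := by
    intro u hu
    ext v
    simp only [Finset.mem_filter, mem_neighborFinset, Finset.mem_erase]
    constructor
    · rintro ⟨hadj, hv⟩
      exact ⟨(G.ne_of_adj hadj).symm, hv⟩
    · rintro ⟨hne, hv⟩
      exact ⟨h u v (Ne.symm hne) (hSlt u hu) (hSlt v hv), hv⟩
  -- For u ∈ S, the neighbors of u outside S are exactly T.filter (G.Adj u)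
  have hNT : ∀ u : V, (G.neighborFinset u).filter (fun v => ¬ (v ∈ S)) =
      T.filter (fun v => G.Adj u v) := by
    intro u
    ext v
    simp only [Finset.mem_filter, mem_neighborFinset, hSdef, hTdef, Finset.mem_univ,
      true_and, not_not]
    tauto
  have hdegS : ∀ u ∈ S, G.degree u = (S.card - 1) + (T.filter (fun v => G.Adj u v)).card := by
    intro u hu
    have := Finset.card_filter_add_card_filter_not
      (s := G.neighborFinset u) (p := (· ∈ S))
    rw [hNS u hu, hNT u, Finset.card_erase_of_mem (by
      rw [hSdef, Finset.mem_filter] at hu ⊢; exact hu)] at this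
    rw [← G.card_neighborFinset_eq_degree, ← this]
  have hsΔ : S.card ≤ Δ := by
    have h1 := hdegS u0 hu0
    have h2 := hSlt u0 hu0
    omega
  have hΔn : Δ < Fintype.card V := by
    rw [hΔdef, hw0]; exact G.degree_lt_card_verts w0
  -- per-vertex bound for u ∈ S
  have hu : ∀ u ∈ S, (T.filter (fun v => G.Adj u v)).card + S.card ≤ Δ := by
    intro u hu
    have h1 := hdegS u hu
    have h2 := hSlt u hu
    omega
  -- per-vertex bound for w ∈ T
  have hw : ∀ w ∈ T, Δ + 1 ≤ (S.filter (fun u => G.Adj u w)).card + T.card := by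
    intro w hwT
    have hdeg : G.degree w = Δ := by
      rw [hTdef, Finset.mem_filter] at hwT; exact hwT.2
    have hsub : G.neighborFinset w ⊆
        (S.filter (fun u => G.Adj u w)) ∪ (T.erase w) := by
      intro v hv
      rw [mem_neighborFinset] at hv
      rcases eq_or_ne (G.degree v) Δ with hvd | hvd
      · exact Finset.mem_union_right _ (Finset.mem_erase.mpr
          ⟨(G.ne_of_adj hv).symm, by rw [hTdef]; simp [hvd]⟩)
      · exact Finset.mem_union_left _ (Finset.mem_filter.mpr
          ⟨by rw [hSdef]; simp [hvd], hv.symm⟩)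
    have hcard := Finset.card_le_card hsub
    have hle := Finset.card_union_le (S.filter (fun u => G.Adj u w)) (T.erase w)
    rw [G.card_neighborFinset_eq_degree, hdeg] at hcard
    have : (T.erase w).card = T.card - 1 := Finset.card_erase_of_mem hwT
    omega
  -- double counting
  set E := ∑ u ∈ S, (T.filter (fun v => G.Adj u v)).card with hEdef
  have key : ∑ w ∈ T, (S.filter (fun u => G.Adj u w)).card = E := by
    rw [hEdef]
    simp_rw [Finset.card_filter]
    exact Finset.sum_comm
  have hsum1 : E + S.card * S.card ≤ S.card * Δ := by
    have : ∑ u ∈ S, ((T.filter (fun v => G.Adj u v)).card + S.card) ≤ ∑ _u ∈ S, Δ :=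
      Finset.sum_le_sum hu
    rw [Finset.sum_add_distrib, Finset.sum_const, Finset.sum_const, smul_eq_mul,
      smul_eq_mul] at this
    omega
  have hsum2 : T.card * (Δ + 1) ≤ E + T.card * T.card := by
    calc T.card * (Δ + 1) = ∑ _w ∈ T, (Δ + 1) := by rw [Finset.sum_const, smul_eq_mul]
      _ ≤ ∑ w ∈ T, ((S.filter (fun u => G.Adj u w)).card + T.card) := Finset.sum_le_sum hw
      _ = (∑ w ∈ T, (S.filter (fun u => G.Adj u w)).card) + ∑ _w ∈ T, T.card :=
        Finset.sum_add_distrib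
      _ = E + T.card * T.card := by rw [key, Finset.sum_const, smul_eq_mul]
  -- arithmetic contradiction
  have c1 : (T.card : ℤ) * (Δ + 1) ≤ E + T.card * T.card := by exact_mod_cast hsum2
  have c2 : (E : ℤ) + S.card * S.card ≤ S.card * Δ := by exact_mod_cast hsum1
  have c3 : (T.card : ℤ) ≤ S.card := by exact_mod_cast hc
  have c4 : (S.card : ℤ) ≤ Δ := by exact_mod_cast hsΔ
  have c5n : Δ + 1 ≤ T.card + S.card := by omega
  have c5 : (Δ : ℤ) + 1 ≤ T.card + S.card := by exact_mod_cast c5n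
  have c6 : (1 : ℤ) ≤ S.card := by exact_mod_cast hS1
  nlinarith [mul_nonneg (sub_nonneg.mpr c3) (by linarith : (0:ℤ) ≤ (S.card : ℤ) + T.card - 1 - Δ)]
end

section
/- Let G be a simple graph of even order n with δ(G) > n/2. If G has at least two vertices of minimum degree, then G contains no Δ(G)-overfull subgraph. -/
open SimpleGraph

/-- `G` contains a `D`-overfull subgraph: a subgraph `H` with maximum degree `D` (all degrees
at most `D`, some degree equal to `D`) satisfying `|E(H)| > D * ⌊|V(H)|/2⌋`. -/
def HasDeltaOverfull {V : Type} (G : SimpleGraph V) (D : ℕ) : Prop :=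
  ∃ H : G.Subgraph,
    H.edgeSet.ncard > D * (H.verts.ncard / 2) ∧
    (∀ v, (H.neighborSet v).ncard ≤ D) ∧ (∃ v, (H.neighborSet v).ncard = D)

/-- Handshake lemma for subgraphs. -/
theorem subgraph_handshake' {V : Type} [Fintype V] [DecidableEq V] (G : SimpleGraph V)
    (H : G.Subgraph) : ∑ v : V, (H.neighborSet v).ncard = 2 * H.edgeSet.ncard := by
  classical
  have h := H.spanningCoe.sum_degrees_eq_twice_card_edges
  have h1 : ∀ v, H.spanningCoe.degree v = (H.neighborSet v).ncard := by
    intro v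
    rw [Subgraph.degree_spanningCoe, Subgraph.degree, ← Nat.card_eq_fintype_card,
      Nat.card_coe_set_eq]
  have hes : H.spanningCoe.edgeSet = H.edgeSet := by
    ext e
    induction e
    simp only [SimpleGraph.mem_edgeSet, Subgraph.mem_edgeSet]
    rfl
  have h2 : H.spanningCoe.edgeFinset.card = H.edgeSet.ncard := by
    rw [← hes, SimpleGraph.edgeFinset, ← Set.ncard_eq_toFinset_card']
  rw [← h2, ← h]
  exact Finset.sum_congr rfl fun v _ => (h1 v).symm

lemma arith_case2 (k d n Eo D : ℕ) (h3 : k * d ≤ Eo + k * (k - 1)) (hEo : Eo + 2 ≤ D)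
    (h4 : D + k + 1 ≤ n) (h5 : n + 2 ≤ 2 * d) (hk3 : 3 ≤ k) (hk4 : 2 * k + 4 ≤ n) : False := by
  obtain ⟨p, rfl⟩ : ∃ p, k = p + 1 := ⟨k - 1, by omega⟩
  simp only [Nat.add_sub_cancel] at h3
  zify at h3 hEo h4 h5 hk3 hk4
  nlinarith [mul_nonneg (by linarith : (0:ℤ) ≤ (p:ℤ) - 2) (by linarith : (0:ℤ) ≤ (n:ℤ) - 2*p - 6)]

/-- A graph of even order `n` with `δ(G) > n/2` and at least two vertices of minimum degree
contains no `Δ(G)`-overfull subgraph. -/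
theorem no_overfull_of_two_min_degree_vertices (V : Type) [Fintype V] [DecidableEq V]
    (G : SimpleGraph V) [DecidableRel G.Adj]
    (heven : Even (Fintype.card V))
    (hδ : (Fintype.card V : ℝ) / 2 < (G.minDegree : ℝ))
    (h2 : 2 ≤ (Finset.univ.filter fun v : V => G.degree v = G.minDegree).card) :
    ¬ HasDeltaOverfull G G.maxDegree := by
  classical
  rintro ⟨H, hover, hle, v₀, hv₀⟩
  set n := Fintype.card V with hn
  set Δ := G.maxDegree with hΔdef
  set δ := G.minDegree with hδdef
  -- two distinct minimum degree vertices
  obtain ⟨w₁, hw₁, w₂, hw₂, hw12⟩ :=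
    Finset.one_lt_card.mp (lt_of_lt_of_le one_lt_two h2)
  simp only [Finset.mem_filter, Finset.mem_univ, true_and] at hw₁ hw₂
  have hVne : Nonempty V := ⟨w₁⟩
  have hδΔ : δ ≤ Δ := le_trans (G.minDegree_le_degree w₁) (G.degree_le_maxDegree w₁)
  -- n even, δ ≥ n/2 + 1
  obtain ⟨t, hnt⟩ : ∃ t, n = 2 * t := by
    obtain ⟨r, hr⟩ := heven; exact ⟨r, by omega⟩
  have hδn : n + 2 ≤ 2 * δ := by
    have : (t : ℝ) < (δ : ℝ) := by
      rw [hnt] at hδ; push_cast at hδ; linarith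
    have ht : t < δ := by exact_mod_cast this
    omega
  have hn2 : 2 ≤ n := le_trans h2 (Finset.card_filter_le _ _)
  -- the vertex set of H
  set Wf := H.verts.toFinset with hWfdef
  set m := Wf.card with hmdef
  have hmn : H.verts.ncard = m := Set.ncard_eq_toFinset_card' _
  rw [hmn] at hover
  have hmlen : m ≤ n := Finset.card_le_univ _
  -- degrees vanish off Wf
  have hdzero : ∀ v, v ∉ Wf → (H.neighborSet v).ncard = 0 := by
    intro v hv
    rw [Set.ncard_eq_zero (Set.toFinite _)]
    by_contra hne
    obtain ⟨u, hu⟩ := Set.nonempty_iff_ne_empty.mpr hne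
    exact hv (by rw [hWfdef, Set.mem_toFinset]; exact H.edge_vert hu)
  -- handshake restricted to Wf
  have hS : ∑ v ∈ Wf, (H.neighborSet v).ncard = 2 * H.edgeSet.ncard := by
    rw [← subgraph_handshake' G H]
    exact Finset.sum_subset (Finset.subset_univ _) fun v _ hv => hdzero v hv
  have hSle : ∑ v ∈ Wf, (H.neighborSet v).ncard ≤ m * Δ := by
    calc ∑ v ∈ Wf, (H.neighborSet v).ncard ≤ ∑ _v ∈ Wf, Δ :=
          Finset.sum_le_sum fun v _ => hle v
      _ = m * Δ := by rw [Finset.sum_const, smul_eq_mul]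
  -- m is odd
  have hmodd : Odd m := by
    by_contra hme
    rw [Nat.not_odd_iff_even] at hme
    obtain ⟨s, hs⟩ := hme
    have hms : m / 2 = s := by omega
    rw [hms] at hover
    have hmul : m * Δ = 2 * (Δ * s) := by rw [hs]; ring
    omega
  obtain ⟨s, hms⟩ := hmodd
  have hdiv : m / 2 = s := by omega
  rw [hdiv] at hover
  have hmul : m * Δ = 2 * (Δ * s) + Δ := by rw [hms]; ring
  -- Δ ≥ 2 and v₀ ∈ Wf with Δ ≤ m - 1
  have hΔ2 : 2 ≤ Δ := by omega
  have hnsne : (H.neighborSet v₀).Nonempty := by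
    rw [Set.nonempty_iff_ne_empty]
    intro hemp
    rw [hemp, Set.ncard_empty] at hv₀
    omega
  obtain ⟨u₀, hu₀⟩ := hnsne
  have hv₀W : v₀ ∈ Wf := by
    rw [hWfdef, Set.mem_toFinset]; exact H.edge_vert hu₀
  have hΔm : Δ + 1 ≤ m := by
    have hsub : H.neighborSet v₀ ⊆ H.verts \ {v₀} := by
      intro x hx
      refine ⟨H.edge_vert (H.adj_symm hx), ?_⟩
      simp only [Set.mem_singleton_iff]
      exact fun h => (H.adj_sub hx).ne' (by rw [h])
    have h1 : (H.neighborSet v₀).ncard ≤ (H.verts \ {v₀}).ncard :=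
      Set.ncard_le_ncard hsub (Set.toFinite _)
    have h2' : (H.verts \ {v₀}).ncard = m - 1 := by
      rw [Set.ncard_diff_singleton_of_mem (by rwa [hWfdef, Set.mem_toFinset] at hv₀W)
        , hmn]
    rw [hv₀, h2'] at h1
    omega
  -- per-vertex inequality inside Wf
  have hkey : ∀ v ∈ Wf, (H.neighborSet v).ncard + (G.neighborFinset v \ Wf).card
      ≤ G.degree v := by
    intro v _
    have hsub : (H.neighborSet v).toFinset ⊆ G.neighborFinset v ∩ Wf := by
      intro x hx
      rw [Set.mem_toFinset] at hx
      rw [Finset.mem_inter, mem_neighborFinset]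
      exact ⟨H.adj_sub hx, by rw [hWfdef, Set.mem_toFinset]; exact H.edge_vert (H.adj_symm hx)⟩
    have h1 : (H.neighborSet v).ncard ≤ (G.neighborFinset v ∩ Wf).card := by
      rw [Set.ncard_eq_toFinset_card']
      exact Finset.card_le_card hsub
    have h2' : (G.neighborFinset v ∩ Wf).card + (G.neighborFinset v \ Wf).card
        = G.degree v := by
      rw [Finset.card_inter_add_card_sdiff, SimpleGraph.degree]
    omega
  have hkey2 : ∀ v ∈ Wf, (H.neighborSet v).ncard + (G.neighborFinset v \ Wf).card
      + (Δ - G.degree v) ≤ Δ := by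
    intro v hv
    have h1 := hkey v hv
    have h2' := G.degree_le_maxDegree v
    omega
  have hsum : (∑ v ∈ Wf, (H.neighborSet v).ncard) + (∑ v ∈ Wf, (G.neighborFinset v \ Wf).card)
      + (∑ v ∈ Wf, (Δ - G.degree v)) ≤ m * Δ := by
    rw [← Finset.sum_add_distrib, ← Finset.sum_add_distrib]
    calc ∑ v ∈ Wf, ((H.neighborSet v).ncard + (G.neighborFinset v \ Wf).card
          + (Δ - G.degree v)) ≤ ∑ _v ∈ Wf, Δ := Finset.sum_le_sum hkey2
      _ = m * Δ := by rw [Finset.sum_const, smul_eq_mul]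
  -- double counting of edges leaving Wf
  have hswap : ∑ v ∈ Wf, (G.neighborFinset v \ Wf).card
      = ∑ u ∈ Wfᶜ, (G.neighborFinset u ∩ Wf).card := by
    have e1 : ∀ v, G.neighborFinset v \ Wf = Wfᶜ.filter (fun u => G.Adj v u) := by
      intro v; ext x
      simp only [Finset.mem_sdiff, mem_neighborFinset, Finset.mem_filter, Finset.mem_compl]
      tauto
    have e2 : ∀ u, G.neighborFinset u ∩ Wf = Wf.filter (fun v => G.Adj u v) := by
      intro u; ext x
      simp only [Finset.mem_inter, mem_neighborFinset, Finset.mem_filter]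
      tauto
    calc ∑ v ∈ Wf, (G.neighborFinset v \ Wf).card
        = ∑ v ∈ Wf, ∑ u ∈ Wfᶜ, if G.Adj v u then 1 else 0 := by
          refine Finset.sum_congr rfl fun v _ => ?_
          rw [e1 v, Finset.card_filter]
      _ = ∑ u ∈ Wfᶜ, ∑ v ∈ Wf, if G.Adj v u then 1 else 0 := Finset.sum_comm
      _ = ∑ u ∈ Wfᶜ, (G.neighborFinset u ∩ Wf).card := by
          refine Finset.sum_congr rfl fun u _ => ?_
          rw [e2 u, Finset.card_filter]
          exact Finset.sum_congr rfl fun v _ => if_congr (G.adj_comm v u) rfl rfl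
  set k := Wfᶜ.card with hkdef
  have hkm : k = n - m := Finset.card_compl _
  -- each outside vertex sends many edges into Wf
  have hin : ∀ u ∈ Wfᶜ, δ ≤ (G.neighborFinset u ∩ Wf).card + (k - 1) := by
    intro u hu
    have hsub : G.neighborFinset u \ Wf ⊆ Wfᶜ.erase u := by
      intro x hx
      rw [Finset.mem_sdiff, mem_neighborFinset] at hx
      rw [Finset.mem_erase, Finset.mem_compl]
      exact ⟨hx.1.ne', hx.2⟩
    have h1 : (G.neighborFinset u \ Wf).card ≤ k - 1 := by
      calc (G.neighborFinset u \ Wf).card ≤ (Wfᶜ.erase u).card := Finset.card_le_card hsub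
        _ = k - 1 := Finset.card_erase_of_mem hu
    have h2' : (G.neighborFinset u ∩ Wf).card + (G.neighborFinset u \ Wf).card
        = G.degree u := by rw [Finset.card_inter_add_card_sdiff, SimpleGraph.degree]
    have h3 := G.minDegree_le_degree u
    omega
  rw [hS, hswap] at hsum
  -- case analysis on k
  by_cases hk1 : k = 1
  · -- Wfᶜ = {u}
    obtain ⟨u, hu⟩ := Finset.card_eq_one.mp hk1
    have hEout : δ ≤ ∑ u' ∈ Wfᶜ, (G.neighborFinset u' ∩ Wf).card := by
      rw [hu, Finset.sum_singleton]
      have := hin u (by rw [hu]; exact Finset.mem_singleton_self u)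
      omega
    -- a minimum degree vertex inside Wf
    obtain ⟨w, hwδ, hwW⟩ : ∃ w, G.degree w = δ ∧ w ∈ Wf := by
      by_cases hwu : w₁ = u
      · refine ⟨w₂, hw₂, ?_⟩
        by_contra hc
        have : w₂ ∈ Wfᶜ := Finset.mem_compl.mpr hc
        rw [hu, Finset.mem_singleton] at this
        exact hw12 (hwu.trans this.symm)
      · refine ⟨w₁, hw₁, ?_⟩
        by_contra hc
        have : w₁ ∈ Wfᶜ := Finset.mem_compl.mpr hc
        rw [hu, Finset.mem_singleton] at this
        exact hwu this
    have hD : Δ - δ ≤ ∑ v ∈ Wf, (Δ - G.degree v) := by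
      have h := Finset.single_le_sum (f := fun v => Δ - G.degree v)
        (fun i _ => Nat.zero_le _) hwW
      simpa [hwδ] using h
    omega
  · -- k ≥ 3
    have hk3 : 3 ≤ k := by omega
    have hEout : k * δ ≤ (∑ u ∈ Wfᶜ, (G.neighborFinset u ∩ Wf).card) + k * (k - 1) := by
      calc k * δ = ∑ _u ∈ Wfᶜ, δ := by rw [Finset.sum_const, smul_eq_mul]
        _ ≤ ∑ u ∈ Wfᶜ, ((G.neighborFinset u ∩ Wf).card + (k - 1)) :=
            Finset.sum_le_sum hin
        _ = (∑ u ∈ Wfᶜ, (G.neighborFinset u ∩ Wf).card) + k * (k - 1) := by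
            rw [Finset.sum_add_distrib, Finset.sum_const, smul_eq_mul]
    have hEo2 : (∑ u ∈ Wfᶜ, (G.neighborFinset u ∩ Wf).card) + 2 ≤ Δ := by omega
    have h4 : Δ + k + 1 ≤ n := by omega
    have hk4 : 2 * k + 4 ≤ n := by omega
    exact arith_case2 k δ n _ Δ hEout hEo2 h4 hδn hk3 hk4
end

section
/- Let G be a bipartite simple graph with bipartition (X, Y) where |X| = |Y| = n, and suppose δ(G) = t for some integer t with 1 ≤ t ≤ n−1. If all vertices of G, except at most t/2 of them, have degree at least (n + t/2)/2 in G, then G has a perfect matching. -/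
open SimpleGraph

/-- Let `G` be a bipartite graph with bipartition `(X, Y)`, `|X| = |Y| = n`, and minimum
degree `t` with `1 ≤ t ≤ n − 1`. If all vertices of `G`, except at most `t/2` of them, have
degree at least `(n + t/2)/2`, then `G` has a perfect matching. -/
theorem bipartite_perfect_matching (V : Type) [Fintype V] [DecidableEq V]
    (G : SimpleGraph V) [DecidableRel G.Adj]
    (X Y : Finset V) (n t : ℕ)
    (hdisj : Disjoint X Y) (hunion : X ∪ Y = Finset.univ)
    (hX : X.card = n) (hY : Y.card = n)
    (hbip : ∀ u v : V, G.Adj u v → (u ∈ X ∧ v ∈ Y) ∨ (u ∈ Y ∧ v ∈ X))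
    (ht1 : 1 ≤ t) (ht2 : t + 1 ≤ n)
    (hδ : G.minDegree = t)
    (hsmall : (({v : V | (G.degree v : ℝ) < ((n : ℝ) + (t : ℝ) / 2) / 2}).ncard : ℝ) ≤
      (t : ℝ) / 2) :
    ∃ M : G.Subgraph, M.IsPerfectMatching := by
  classical
  -- degree lower bound
  have hdeg : ∀ v : V, t ≤ G.degree v := fun v => hδ ▸ G.minDegree_le_degree v
  set L : Set V := {v : V | (G.degree v : ℝ) < ((n : ℝ) + (t : ℝ) / 2) / 2} with hL
  -- Hall's condition
  have hall : ∀ s : Finset {x : V // x ∈ X},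
      s.card ≤ (s.biUnion (fun x => G.neighborFinset x.val)).card := by
    intro s
    by_contra hcon
    push_neg at hcon
    set N : Finset V := s.biUnion (fun x => G.neighborFinset x.val) with hN
    set S : Finset V := s.image Subtype.val with hS
    have hScard : S.card = s.card := Finset.card_image_of_injective _ Subtype.val_injective
    have hSX : S ⊆ X := by
      intro v hv
      obtain ⟨x, _, rfl⟩ := Finset.mem_image.mp hv
      exact x.2
    have hSn : S.card ≤ n := hX ▸ Finset.card_le_card hSX
    -- s nonempty
    obtain ⟨x₁, hx₁⟩ : s.Nonempty := Finset.card_pos.mp (by omega)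
    -- neighbor sets inside N
    have hsub : ∀ x ∈ s, G.neighborFinset x.val ⊆ N := by
      intro x hx
      rw [hN]
      exact Finset.subset_biUnion_of_mem (fun x : {x : V // x ∈ X} => G.neighborFinset x.val) hx
    have htN : t ≤ N.card := le_trans (hdeg x₁.val)
      (by rw [← G.card_neighborFinset_eq_degree]; exact Finset.card_le_card (hsub x₁ hx₁))
    -- some vertex of S has large degree
    have hbig : ∃ x ∈ s, ((n : ℝ) + (t : ℝ) / 2) / 2 ≤ (G.degree x.val : ℝ) := by
      by_contra hall2
      push_neg at hall2
      have hsubL : (S : Set V) ⊆ L := by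
        intro v hv
        obtain ⟨x, hx, rfl⟩ := Finset.mem_image.mp hv
        exact hall2 x hx
      have h1 : (S.card : ℝ) ≤ (L.ncard : ℝ) := by
        have := Set.ncard_le_ncard hsubL (Set.toFinite L)
        rw [Set.ncard_coe_finset] at this
        exact_mod_cast this
      have h2 : t + 1 ≤ S.card := by omega
      have h2' : (t : ℝ) + 1 ≤ (S.card : ℝ) := by exact_mod_cast h2
      linarith
    obtain ⟨x₀, hx₀, hx₀deg⟩ := hbig
    have hNbig : ((n : ℝ) + (t : ℝ) / 2) / 2 ≤ (N.card : ℝ) := by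
      refine le_trans hx₀deg ?_
      have : G.degree x₀.val ≤ N.card := by
        rw [← G.card_neighborFinset_eq_degree]; exact Finset.card_le_card (hsub x₀ hx₀)
      exact_mod_cast this
    -- N ⊆ Y
    have hNY : N ⊆ Y := by
      intro v hv
      obtain ⟨x, _, hvx⟩ := Finset.mem_biUnion.mp hv
      have hadj : G.Adj x.val v := (G.mem_neighborFinset _ _).mp hvx
      rcases hbip _ _ hadj with ⟨_, h⟩ | ⟨h, _⟩
      · exact h
      · exact absurd (Finset.disjoint_left.mp hdisj x.2 h) (fun a => a)
    set Yc : Finset V := Y \ N with hYc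
    have hYcCard : Yc.card = n - N.card := by rw [hYc, Finset.card_sdiff_of_subset hNY, hY]
    have hNn : N.card < n := lt_of_lt_of_le hcon (hScard ▸ hSn)
    have hYcNe : Yc.Nonempty := Finset.card_pos.mp (by omega)
    -- vertices of Yc have neighbors only in X \ S
    have hYcnbr : ∀ y ∈ Yc, G.neighborFinset y ⊆ X \ S := by
      intro y hy w hw
      have hadj : G.Adj y w := (G.mem_neighborFinset _ _).mp hw
      have hyY : y ∈ Y := (Finset.mem_sdiff.mp hy).1
      have hyN : y ∉ N := (Finset.mem_sdiff.mp hy).2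
      rcases hbip _ _ hadj with ⟨h, _⟩ | ⟨_, h⟩
      · exact absurd (Finset.disjoint_left.mp hdisj h hyY) (fun a => a)
      · refine Finset.mem_sdiff.mpr ⟨h, fun hwS => ?_⟩
        obtain ⟨x, hx, rfl⟩ := Finset.mem_image.mp hwS
        exact hyN (hsub x hx ((G.mem_neighborFinset _ _).mpr hadj.symm))
    have hYcdeg : ∀ y ∈ Yc, G.degree y ≤ n - S.card := by
      intro y hy
      have := Finset.card_le_card (hYcnbr y hy)
      rw [Finset.card_sdiff_of_subset hSX, hX] at this
      rwa [← G.card_neighborFinset_eq_degree]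
    -- Yc ⊆ L
    have hYcL : (Yc : Set V) ⊆ L := by
      intro y hy
      have h1 : (G.degree y : ℝ) ≤ (n : ℝ) - S.card := by
        have := hYcdeg y hy
        have h2 : (G.degree y : ℝ) ≤ ((n - S.card : ℕ) : ℝ) := by exact_mod_cast this
        rwa [Nat.cast_sub hSn] at h2
      have hNS : (N.card : ℝ) + 1 ≤ (S.card : ℝ) := by
        have : N.card + 1 ≤ S.card := by omega
        exact_mod_cast this
      show (G.degree y : ℝ) < ((n : ℝ) + (t : ℝ) / 2) / 2
      have ht1' : (1 : ℝ) ≤ (t : ℝ) := by exact_mod_cast ht1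
      linarith
    have hYcL' : (Yc.card : ℝ) ≤ (t : ℝ) / 2 := by
      have := Set.ncard_le_ncard hYcL (Set.toFinite L)
      rw [Set.ncard_coe_finset] at this
      calc (Yc.card : ℝ) ≤ (L.ncard : ℝ) := by exact_mod_cast this
        _ ≤ (t : ℝ) / 2 := hsmall
    have hYcCard' : (Yc.card : ℝ) = (n : ℝ) - N.card := by
      rw [hYcCard, Nat.cast_sub (le_of_lt hNn)]
    -- final contradiction
    obtain ⟨y, hy⟩ := hYcNe
    have h1 : (t : ℝ) ≤ (n : ℝ) - S.card := by
      have h2 : t ≤ n - S.card := le_trans (hdeg y) (hYcdeg y hy)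
      have h3 : (t : ℝ) ≤ ((n - S.card : ℕ) : ℝ) := by exact_mod_cast h2
      rwa [Nat.cast_sub hSn] at h3
    have hNS : (N.card : ℝ) + 1 ≤ (S.card : ℝ) := by
      have : N.card + 1 ≤ S.card := by omega
      exact_mod_cast this
    have ht1' : (1 : ℝ) ≤ (t : ℝ) := by exact_mod_cast ht1
    linarith
  -- get the injection from Hall's theorem
  obtain ⟨f, hfinj, hfmem⟩ :=
    (Finset.all_card_le_biUnion_card_iff_exists_injective
      (fun x : {x : V // x ∈ X} => G.neighborFinset x.val)).mp hall
  have hfadj : ∀ x : {x : V // x ∈ X}, G.Adj x.val (f x) := fun x =>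
    (G.mem_neighborFinset _ _).mp (hfmem x)
  have hfY : ∀ x : {x : V // x ∈ X}, f x ∈ Y := by
    intro x
    rcases hbip _ _ (hfadj x) with ⟨_, h⟩ | ⟨h, _⟩
    · exact h
    · exact absurd (Finset.disjoint_left.mp hdisj x.2 h) (fun a => a)
  -- f is surjective onto Y
  have himg : Finset.image f Finset.univ = Y := by
    apply Finset.eq_of_subset_of_card_le
    · intro v hv
      obtain ⟨x, _, rfl⟩ := Finset.mem_image.mp hv
      exact hfY x
    · rw [Finset.card_image_of_injective _ hfinj, Finset.card_univ, Fintype.card_coe, hX, hY]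
  have hsurj : ∀ y ∈ Y, ∃ x : {x : V // x ∈ X}, f x = y := by
    intro y hy
    rw [← himg] at hy
    obtain ⟨x, _, hx⟩ := Finset.mem_image.mp hy
    exact ⟨x, hx⟩
  -- build the matching subgraph
  refine ⟨⟨Set.univ,
      fun u v => (∃ x : {x : V // x ∈ X}, x.val = u ∧ f x = v) ∨
        (∃ x : {x : V // x ∈ X}, x.val = v ∧ f x = u), ?_, ?_, ?_⟩, ?_, fun v => trivial⟩
  · rintro u v (⟨x, rfl, rfl⟩ | ⟨x, rfl, rfl⟩)
    · exact hfadj x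
    · exact (hfadj x).symm
  · intro u v _; trivial
  · constructor; rintro u v (h | h)
    · exact Or.inr h
    · exact Or.inl h
  · intro v hv
    have hvXY : v ∈ X ∨ v ∈ Y := by
      have : v ∈ X ∪ Y := hunion ▸ Finset.mem_univ v
      exact Finset.mem_union.mp this
    rcases hvXY with hvX | hvY
    · refine ⟨f ⟨v, hvX⟩, Or.inl ⟨⟨v, hvX⟩, rfl, rfl⟩, ?_⟩
      rintro w (⟨x, hx1, rfl⟩ | ⟨x, hx1, hx2⟩)
      · congr 1; exact Subtype.ext hx1
      · exact absurd (Finset.disjoint_left.mp hdisj hvX (hx2 ▸ hfY x)) (fun a => a)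
    · obtain ⟨x, hxv⟩ := hsurj v hvY
      refine ⟨x.val, Or.inr ⟨x, rfl, hxv⟩, ?_⟩
      rintro w (⟨x', hx1, hx2⟩ | ⟨x', hx1, hx2⟩)
      · exact absurd (Finset.disjoint_left.mp hdisj (hx1 ▸ x'.2) hvY) (fun a => a)
      · rw [← hx1]; congr 1; exact hfinj (by rw [hx2, hxv])
end

section
/- There exist constants such that for all 0 < 1/n₀ ≪ ε < 1 the following holds: let G be a simple graph on 2n ≥ n₀ vertices with δ(G) ≥ (1+ε)n, and let {a₁b₁, …, a_tb_t} be a set of t ≤ εn/4 pairwise disjoint pairs of vertices of G (a matching in the complete graph on V(G)). Then there exist vertex-disjoint paths P₁, …, P_t in G such that the vertex sets of the P_i together cover all of V(G) and each P_i joins a_i to b_i. -/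
open SimpleGraph Finset

variable {V : Type} [Fintype V] [DecidableEq V] {G : SimpleGraph V} [DecidableRel G.Adj]
set_option linter.unusedSectionVars false
set_option linter.unnecessarySimpa false
variable {V : Type} [Fintype V] [DecidableEq V] {G : SimpleGraph V} [DecidableRel G.Adj]

lemma surgery (l : List V) (hc : l.Chain' G.Adj) (hne : l ≠ [])
    (z : V) (i : ℕ) (hi : i + 2 ≤ l.length)
    (hx : G.Adj (l.getLast hne) (l[i]'(by omega)))
    (hz : G.Adj z (l[i+1]'(by omega))) :
    ∃ l' : List V, l'.Chain' G.Adj ∧ l'.head? = l.head? ∧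
      l'.getLast? = some z ∧ l'.Perm (l ++ [z]) := by
  have hlen : 2 ≤ l.length := by omega
  have htne : l.take (i+1) ≠ [] := by
    intro h
    have h2 : (l.take (i+1)).length = 0 := by rw [h]; rfl
    rw [List.length_take] at h2
    omega
  have hdne : l.drop (i+1) ≠ [] := by
    intro h
    have h2 : (l.drop (i+1)).length = 0 := by rw [h]; rfl
    rw [List.length_drop] at h2
    omega
  have hdr : (l.drop (i+1)).reverse ≠ [] := by simpa using hdne
  refine ⟨l.take (i+1) ++ ((l.drop (i+1)).reverse ++ [z]), ?_, ?_, ?_, ?_⟩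
  · -- Chain'
    have hct : (l.take (i+1)).Chain' G.Adj := by
      have := List.take_append_drop (i+1) l
      exact (List.isChain_append.1 (this ▸ hc)).1
    have hcd : (l.drop (i+1)).Chain' G.Adj := by
      have := List.take_append_drop (i+1) l
      exact (List.isChain_append.1 (this ▸ hc)).2.1
    have hcdr : ((l.drop (i+1)).reverse).Chain' G.Adj := by
      change List.IsChain _ _; rw [List.isChain_reverse]
      exact List.IsChain.imp (fun a b h => h.symm) hcd
    have hgt : (l.take (i+1)).getLast? = some (l[i]'(by omega)) := by
      rw [List.getLast?_eq_getElem?]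
      have h1 : (l.take (i+1)).length = i + 1 := by
        rw [List.length_take]; omega
      rw [h1]
      simp [List.getElem?_take, List.getElem?_eq_getElem (by omega : i < l.length)]
    have hhd : (l.drop (i+1)).head? = some (l[i+1]'(by omega)) := by
      rw [List.head?_eq_getElem?, List.getElem?_drop]
      simp [List.getElem?_eq_getElem (by omega : i + 1 + 0 < l.length)]
    have hgl : (l.drop (i+1)).getLast? = some (l.getLast hne) := by
      rw [List.getLast?_eq_getElem?, List.getElem?_drop, List.length_drop]
      rw [List.getLast_eq_getElem]
      have : i + 1 + (l.length - (i+1) - 1) = l.length - 1 := by omega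
      rw [this]
      simp [List.getElem?_eq_getElem (by omega : l.length - 1 < l.length)]
    change List.IsChain _ _; rw [List.isChain_append]
    refine ⟨hct, ?_, ?_⟩
    · rw [List.isChain_append]
      refine ⟨hcdr, List.isChain_singleton _, ?_⟩
      intro x hx' y hy'
      rw [List.getLast?_reverse, hhd] at hx'
      simp at hx' hy'
      subst hx' hy'
      exact hz.symm
    · intro x hx' y hy'
      rw [hgt] at hx'
      rw [List.head?_append_of_ne_nil _ hdr, List.head?_reverse, hgl] at hy'
      simp at hx' hy'
      subst hx' hy'
      exact hx.symm
  · rw [List.head?_append_of_ne_nil _ htne]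
    conv_rhs => rw [← List.take_append_drop (i+1) l]
    rw [List.head?_append_of_ne_nil _ htne]
  · rw [← List.append_assoc, List.getLast?_concat]
  · have h1 : (l.take (i+1) ++ ((l.drop (i+1)).reverse ++ [z])).Perm
        (l.take (i+1) ++ (l.drop (i+1) ++ [z])) :=
      List.Perm.append_left _ (((l.drop (i+1)).reverse_perm).append_right [z])
    have h2 : l.take (i+1) ++ (l.drop (i+1) ++ [z]) = l ++ [z] := by
      rw [← List.append_assoc, List.take_append_drop]
    rw [h2] at h1
    exact h1
lemma exists_rotation {k : ℕ} (hdeg : ∀ v, k ≤ G.degree v)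
    (l : List V) (hn : l.Nodup) (hne : l ≠ [])
    (z : V) (hzl : z ∉ l) (e : Finset V)
    (hstuck : ∀ w, G.Adj (l.getLast hne) w → w ∈ e ∨ w ∈ l)
    (hcard : Fintype.card V + e.card < 2 * k) :
    ∃ i, ∃ _h : i + 2 ≤ l.length,
      G.Adj (l.getLast hne) (l[i]'(by omega)) ∧ G.Adj z (l[i+1]'(by omega)) := by
  set x := l.getLast hne with hxdef
  have hxl : x ∈ l := l.getLast_mem hne
  have hxget : x = l[l.length - 1]'(by
      have := List.length_pos_iff.2 hne; omega) := List.getLast_eq_getElem hne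
  have hlpos : 0 < l.length := List.length_pos_iff.2 hne
  set S : Finset ℕ := (Finset.range l.length).filter
    (fun i => i + 2 ≤ l.length ∧ G.Adj x (l.getD i x)) with hSdef
  set T : Finset V := S.image (fun i => l.getD (i+1) x) with hTdef
  -- |S| ≥ k - e.card
  have hS : k ≤ S.card + e.card := by
    have hinj : Set.InjOn (fun w => l.idxOf w) ((((G.neighborFinset x) \ e) : Finset V) : Set V) := by
      intro w1 h1 w2 h2 hew
      rw [Finset.mem_coe, Finset.mem_sdiff] at h1 h2
      have m1 : w1 ∈ l := by
        rcases hstuck w1 (by simpa using h1.1) with h | h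
        · exact absurd h h1.2
        · exact h
      have m2 : w2 ∈ l := by
        rcases hstuck w2 (by simpa using h2.1) with h | h
        · exact absurd h h2.2
        · exact h
      have hlt1 := List.idxOf_lt_length_iff.2 m1
      have hlt2 := List.idxOf_lt_length_iff.2 m2
      have d1 : l.getD (l.idxOf w1) x = w1 := by
        rw [List.getD_eq_getElem l x hlt1]; exact List.getElem_idxOf hlt1
      have d2 : l.getD (l.idxOf w2) x = w2 := by
        rw [List.getD_eq_getElem l x hlt2]; exact List.getElem_idxOf hlt2
      simp only at hew
      rw [hew] at d1
      rw [d1] at d2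
      exact d2
    have hmap : ∀ w ∈ (G.neighborFinset x) \ e, l.idxOf w ∈ S := by
      intro w hw
      obtain ⟨hw1, hw2⟩ := Finset.mem_sdiff.1 hw
      have hadj : G.Adj x w := by simpa using hw1
      have hwl : w ∈ l := by
        rcases hstuck w hadj with h | h
        · exact absurd h hw2
        · exact h
      have hlt : l.idxOf w < l.length := List.idxOf_lt_length_iff.2 hwl
      have hgw : l[l.idxOf w]'hlt = w := List.getElem_idxOf hlt
      have hwx : w ≠ x := fun h => (G.irrefl (h ▸ hadj))
      have hne2 : l.idxOf w ≠ l.length - 1 := by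
        intro h
        apply hwx
        rw [← hgw, hxget]
        congr 1
      rw [hSdef, Finset.mem_filter, Finset.mem_range]
      refine ⟨hlt, by omega, ?_⟩
      rwa [List.getD_eq_getElem l x hlt, hgw]
    have := Finset.card_le_card_of_injOn _ hmap hinj
    have h2 : (G.neighborFinset x).card ≤ ((G.neighborFinset x) \ e).card + e.card :=
      Finset.card_le_card_sdiff_add_card
    have h3 : k ≤ (G.neighborFinset x).card := by
      rw [SimpleGraph.card_neighborFinset_eq_degree]; exact hdeg x
    omega
  -- |T| = |S|
  have hT : T.card = S.card := by
    rw [hTdef]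
    apply Finset.card_image_of_injOn
    intro i hi j hj hij
    rw [Finset.mem_coe, hSdef, Finset.mem_filter] at hi hj
    obtain ⟨-, hi2, -⟩ := hi
    obtain ⟨-, hj2, -⟩ := hj
    simp only at hij
    rw [List.getD_eq_getElem l x (by omega : i+1 < l.length),
      List.getD_eq_getElem l x (by omega : j+1 < l.length)] at hij
    have := (hn.getElem_inj_iff).1 hij
    omega
  -- z ∉ T
  have hzT : z ∉ T := by
    intro h
    rw [hTdef, Finset.mem_image] at h
    obtain ⟨i, hi, h2⟩ := h
    rw [hSdef, Finset.mem_filter] at hi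
    obtain ⟨-, hi2, -⟩ := hi
    apply hzl
    rw [← h2, List.getD_eq_getElem l x (by omega : i+1 < l.length)]
    exact List.getElem_mem _
  -- T meets N(z)
  have hmeet : ∃ w ∈ T, G.Adj z w := by
    by_contra hcon
    push_neg at hcon
    have hdisj : Disjoint T (G.neighborFinset z) := by
      rw [Finset.disjoint_left]
      intro w hw hw2
      exact hcon w hw (by simpa using hw2)
    have hsub : T ∪ G.neighborFinset z ⊆ Finset.univ.erase z := by
      intro w hw
      rcases Finset.mem_union.1 hw with h | h
      · exact Finset.mem_erase.2 ⟨fun hh => hzT (hh ▸ h), Finset.mem_univ _⟩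
      · refine Finset.mem_erase.2 ⟨fun hh => ?_, Finset.mem_univ _⟩
        subst hh
        rw [SimpleGraph.mem_neighborFinset] at h
        exact G.irrefl h
    have hc1 := Finset.card_le_card hsub
    rw [Finset.card_union_of_disjoint hdisj] at hc1
    have hc2 : (Finset.univ.erase z).card = Fintype.card V - 1 := by
      rw [Finset.card_erase_of_mem (Finset.mem_univ _), Finset.card_univ]
    have hc3 : k ≤ (G.neighborFinset z).card := by
      rw [SimpleGraph.card_neighborFinset_eq_degree]; exact hdeg z
    have hc4 : 1 ≤ Fintype.card V := Fintype.card_pos_iff.2 ⟨z⟩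
    omega
  obtain ⟨w, hw, hadjzw⟩ := hmeet
  rw [hTdef, Finset.mem_image] at hw
  obtain ⟨i, hi, hwi⟩ := hw
  rw [hSdef, Finset.mem_filter] at hi
  obtain ⟨-, hi2, hadjx⟩ := hi
  refine ⟨i, hi2, ?_, ?_⟩
  · rwa [List.getD_eq_getElem l x (by omega : i < l.length)] at hadjx
  · rw [← List.getD_eq_getElem l x (by omega : i+1 < l.length)]
    rw [← hwi] at hadjzw
    exact hadjzw

lemma grow {k : ℕ} (hdeg : ∀ v, k ≤ G.degree v)
    (hcard : Fintype.card V + 1 < 2 * k)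
    (l : List V) (hc : l.Chain' G.Adj) (hn : l.Nodup) (hne : l ≠ [])
    (b : V) (hb : b ∉ l) (u : V) (hu : u ∉ l) (hub : u ≠ b) :
    ∃ w, w ∉ l ∧ w ≠ b ∧ ∃ l' : List V, l'.Chain' G.Adj ∧
      l'.head? = l.head? ∧ l'.Perm (l ++ [w]) := by
  set x := l.getLast hne with hxdef
  by_cases hcase : ∃ w, G.Adj x w ∧ w ∉ l ∧ w ≠ b
  · obtain ⟨w, hadj, hwl, hwb⟩ := hcase
    by_cases h1 : l.length = 1
    · -- l = [x]
      have hlx : l = [x] := by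
        have : l = [l.getLast hne] := by
          cases l with
          | nil => exact absurd rfl hne
          | cons a t =>
            cases t with
            | nil => simp
            | cons b t2 => simp at h1
        exact this
      refine ⟨w, hwl, hwb, [x, w], ?_, ?_, ?_⟩
      · exact List.isChain_pair.2 hadj
      · rw [hlx]; rfl
      · rw [hlx]; rfl
    · have hlen : 2 ≤ l.length := by
        have := List.length_pos_iff.2 hne; omega
      have hi : (l.length - 2) + 2 ≤ l.length := by omega
      have hxe : G.Adj x (l[l.length - 2]'(by omega)) := by
        have := List.isChain_iff_getElem.1 hc (l.length - 2) (by omega)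
        have hx2 : x = l[l.length - 1]'(by omega) := List.getLast_eq_getElem hne
        have heq : l.length - 2 + 1 = l.length - 1 := by omega
        rw [hx2]
        have := this.symm
        convert this using 2
        omega
      have hze : G.Adj w (l[(l.length - 2) + 1]'(by omega)) := by
        have heq : l.length - 2 + 1 = l.length - 1 := by omega
        have hx2 : x = l[l.length - 1]'(by omega) := List.getLast_eq_getElem hne
        convert hadj.symm using 2
        rw [hx2]
        congr 1
      obtain ⟨l', hc', hh', hg', hp'⟩ := surgery l hc hne w (l.length - 2) hi hxe hze
      exact ⟨w, hwl, hwb, l', hc', hh', hp'⟩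
  · push_neg at hcase
    have hstuck : ∀ w, G.Adj x w → w ∈ ({b} : Finset V) ∨ w ∈ l := by
      intro w hadj
      by_cases hwl : w ∈ l
      · exact Or.inr hwl
      · exact Or.inl (Finset.mem_singleton.2 (hcase w hadj hwl))
    obtain ⟨i, hi, hxe, hze⟩ := exists_rotation hdeg l hn hne u hu {b} hstuck
      (by simpa using hcard)
    obtain ⟨l', hc', hh', hg', hp'⟩ := surgery l hc hne u i hi hxe hze
    exact ⟨u, hu, hub, l', hc', hh', hp'⟩

lemma ext_all {k : ℕ} (hdeg : ∀ v, k ≤ G.degree v)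
    (hcard : Fintype.card V + 1 < 2 * k) (b : V) :
    ∀ (m : ℕ) (l : List V), l.Chain' G.Adj → l.Nodup → l ≠ [] → b ∉ l →
    (Finset.univ.filter (fun v => v ∉ l ∧ v ≠ b)).card = m →
    ∃ l' : List V, l'.Chain' G.Adj ∧ l'.Nodup ∧ l' ≠ [] ∧
      l'.head? = l.head? ∧ b ∉ l' ∧ ∀ v, v ≠ b → v ∈ l' := by
  intro m
  induction m with
  | zero =>
    intro l hc hn hne hb hm
    refine ⟨l, hc, hn, hne, rfl, hb, ?_⟩
    intro v hv
    by_contra hvl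
    have : v ∈ Finset.univ.filter (fun v => v ∉ l ∧ v ≠ b) := by
      simp [hvl, hv]
    rw [Finset.card_eq_zero.1 hm] at this
    simp at this
  | succ m ih =>
    intro l hc hn hne hb hm
    have hx : ∃ u, u ∈ Finset.univ.filter (fun v => v ∉ l ∧ v ≠ b) := by
      apply Finset.card_pos.1
      omega
    obtain ⟨u, hu⟩ := hx
    rw [Finset.mem_filter] at hu
    obtain ⟨-, hul, hub⟩ := hu
    obtain ⟨w, hwl, hwb, l', hc', hh', hp'⟩ := grow hdeg hcard l hc hn hne b hb u hul hub
    have hn' : l'.Nodup := hp'.nodup_iff.2 (by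
      rw [List.nodup_append]
      exact ⟨hn, List.nodup_singleton _, by intro a ha b hb; simp at hb; subst hb; exact fun h => hwl (h ▸ ha)⟩)
    have hne' : l' ≠ [] := by
      intro h
      have := hp'.length_eq
      rw [h] at this
      simp at this
    have hb' : b ∉ l' := by
      intro h
      have := hp'.mem_iff.1 h
      simp at this
      rcases this with h | h
      · exact hb h
      · exact hwb h.symm
    have hm' : (Finset.univ.filter (fun v => v ∉ l' ∧ v ≠ b)).card = m := by
      have hseteq : Finset.univ.filter (fun v => v ∉ l' ∧ v ≠ b) =
          (Finset.univ.filter (fun v => v ∉ l ∧ v ≠ b)).erase w := by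
        ext v
        simp only [Finset.mem_erase, Finset.mem_filter, Finset.mem_univ, true_and]
        constructor
        · intro ⟨h1, h2⟩
          have hvl : v ∉ l := fun h => h1 (hp'.mem_iff.2 (by simp [h]))
          have hvw : v ≠ w := fun h => h1 (hp'.mem_iff.2 (by simp [h]))
          exact ⟨hvw, hvl, h2⟩
        · intro ⟨h1, h2, h3⟩
          refine ⟨fun h => ?_, h3⟩
          have := hp'.mem_iff.1 h
          simp at this
          rcases this with h | h
          · exact h2 h
          · exact h1 h
      rw [hseteq, Finset.card_erase_of_mem (by simp [hwl, hwb]), hm]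
      rfl
    obtain ⟨l'', hc'', hn'', hne'', hh'', hb'', hcov''⟩ := ih l' hc' hn' hne' hb' hm'
    exact ⟨l'', hc'', hn'', hne'', by rw [hh'', hh'], hb'', hcov''⟩

lemma hamilton {k : ℕ} (hdeg : ∀ v, k ≤ G.degree v)
    (hcard : Fintype.card V + 1 < 2 * k)
    (a b : V) (hab : a ≠ b) :
    ∃ l : List V, l.Chain' G.Adj ∧ l.Nodup ∧ l.head? = some a ∧
      l.getLast? = some b ∧ ∀ v, v ∈ l := by
  obtain ⟨l, hc, hn, hne, hh, hb, hcov⟩ := ext_all hdeg hcard b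
    _ [a] (List.isChain_singleton a) (List.nodup_singleton a) (by simp)
    (by simpa using hab.symm) rfl
  have hhead : l.head? = some a := by simpa using hh
  have hstuck : ∀ w, G.Adj (l.getLast hne) w → w ∈ ({b} : Finset V) ∨ w ∈ l := by
    intro w hadj
    by_cases hwb : w = b
    · exact Or.inl (Finset.mem_singleton.2 hwb)
    · exact Or.inr (hcov w hwb)
  obtain ⟨i, hi, hxe, hze⟩ := exists_rotation hdeg l hn hne b hb {b} hstuck
    (by simpa using hcard)
  obtain ⟨l', hc', hh', hg', hp'⟩ := surgery l hc hne b i hi hxe hze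
  have hn' : l'.Nodup := hp'.nodup_iff.2 (by
    rw [List.nodup_append]
    exact ⟨hn, List.nodup_singleton _, by intro a ha b' hb'; simp at hb'; subst hb'; exact fun h => hb (h ▸ ha)⟩)
  refine ⟨l', hc', hn', by rw [hh', hhead], hg', ?_⟩
  intro v
  rw [hp'.mem_iff]
  by_cases hvb : v = b
  · simp [hvb]
  · simp [hcov v hvb]

lemma walk_of_chain :
    ∀ (l : List V), l.Chain' G.Adj → ∀ u v, l.head? = some u → l.getLast? = some v →
    ∃ w : G.Walk u v, w.support = l := by
  intro l
  induction l with
  | nil => intro _ u v h; simp at h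
  | cons x r ih =>
    intro hc u v hh hg
    have hux : u = x := by simpa using hh.symm
    subst hux
    cases r with
    | nil =>
      have : v = u := by simpa using hg.symm
      subst this
      exact ⟨SimpleGraph.Walk.nil, rfl⟩
    | cons y r2 =>
      have hadj : G.Adj u y := (List.isChain_cons_cons.1 hc).1
      have hc2 : (y :: r2).Chain' G.Adj := (List.isChain_cons_cons.1 hc).2
      have hg2 : (y :: r2).getLast? = some v := by
        rw [← hg, List.getLast?_cons_cons]
      obtain ⟨w2, hw2⟩ := ih hc2 y v rfl hg2
      exact ⟨SimpleGraph.Walk.cons hadj w2, by simp [hw2]⟩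

set_option maxHeartbeats 1000000 in
/-- For every `0 < ε < 1` there is `n₀` such that for every graph `G` on `2n ≥ n₀` vertices
with `δ(G) ≥ (1+ε)n` and every matching `{a₁b₁, …, a_tb_t}` (pairwise disjoint pairs of
vertices) in the complete graph on `V(G)` of size `t ≤ εn/4`, there are vertex-disjoint
paths `P₁, …, P_t` in `G` covering all of `V(G)` with `Pᵢ` joining `aᵢ` to `bᵢ`. -/
theorem disjoint_paths_cover :
    ∀ ε : ℝ, 0 < ε → ε < 1 →
      ∃ n₀ : ℕ, 0 < n₀ ∧
        ∀ (V : Type) [Fintype V] [DecidableEq V] (G : SimpleGraph V) [DecidableRel G.Adj]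
          (n t : ℕ) (a b : Fin t → V),
          Fintype.card V = 2 * n → n₀ ≤ 2 * n →
          (1 + ε) * (n : ℝ) ≤ (G.minDegree : ℝ) →
          1 ≤ t → (t : ℝ) ≤ ε * (n : ℝ) / 4 →
          Function.Injective a → Function.Injective b → (∀ i j, a i ≠ b j) →
          ∃ P : (i : Fin t) → G.Walk (a i) (b i),
            (∀ i, (P i).IsPath) ∧
            (∀ i j, i ≠ j → ∀ v : V, v ∈ (P i).support → v ∉ (P j).support) ∧
            (∀ v : V, ∃ i, v ∈ (P i).support) := by
  intro ε hε hε1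
  refine ⟨1, Nat.one_pos, ?_⟩
  intro V _ _ G _ n t a b hcardV hn0 hδ ht1 ht ha hbinj hab
  classical
  have hδdeg : ∀ v, G.minDegree ≤ G.degree v := G.minDegree_le_degree
  have htR : (1 : ℝ) ≤ t := by exact_mod_cast ht1
  have hnR : (4 : ℝ) ≤ n := by
    nlinarith [ht, htR, hε1, hε]
  have h1 : 2*n + 8*t ≤ 2*G.minDegree := by
    have : (2*(n:ℝ) + 8*(t:ℝ)) ≤ 2*(G.minDegree : ℝ) := by nlinarith
    exact_mod_cast this
  -- Hall system for middle vertices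
  set A : Fin t → Finset V := fun i =>
    ((G.neighborFinset (a i)) ∩ (G.neighborFinset (b i))) \
      ((Finset.univ.image a) ∪ (Finset.univ.image b)) with hA
  have hAcard : ∀ i, t ≤ (A i).card := by
    intro i
    have e1 := Finset.card_inter_add_card_union (G.neighborFinset (a i)) (G.neighborFinset (b i))
    have e2 : (G.neighborFinset (a i) ∪ G.neighborFinset (b i)).card ≤ Fintype.card V := by
      rw [← Finset.card_univ]
      exact Finset.card_le_univ _
    have e3 : G.minDegree ≤ (G.neighborFinset (a i)).card := by
      rw [G.card_neighborFinset_eq_degree]; exact hδdeg _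
    have e4 : G.minDegree ≤ (G.neighborFinset (b i)).card := by
      rw [G.card_neighborFinset_eq_degree]; exact hδdeg _
    have e5 : ((Finset.univ.image a) ∪ (Finset.univ.image b)).card ≤ 2*t := by
      refine le_trans (Finset.card_union_le _ _) ?_
      have i1 : (Finset.univ.image a).card ≤ t := by
        refine le_trans (Finset.card_image_le) ?_
        simp
      have i2 : (Finset.univ.image b).card ≤ t := by
        refine le_trans (Finset.card_image_le) ?_
        simp
      omega
    have e6 := Finset.card_le_card_sdiff_add_card
      (s := (G.neighborFinset (a i)) ∩ (G.neighborFinset (b i)))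
      (t := (Finset.univ.image a) ∪ (Finset.univ.image b))
    have hAi : A i = ((G.neighborFinset (a i)) ∩ (G.neighborFinset (b i))) \
      ((Finset.univ.image a) ∪ (Finset.univ.image b)) := rfl
    rw [hAi]
    omega
  have hall : ∀ (s' : Finset (Fin t)), s'.card ≤ (s'.biUnion A).card := by
    intro s'
    rcases s'.eq_empty_or_nonempty with h | ⟨i0, hi0⟩
    · simp [h]
    · have hsub : A i0 ⊆ s'.biUnion A := fun x hx => Finset.mem_biUnion.2 ⟨i0, hi0, hx⟩
      have := Finset.card_le_card hsub
      have hle : s'.card ≤ t := by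
        simpa using Finset.card_le_univ s'
      have := hAcard i0
      omega
  obtain ⟨c, hcinj, hcmem⟩ := (Finset.all_card_le_biUnion_card_iff_exists_injective A).1 hall
  have hadja : ∀ i, G.Adj (a i) (c i) := by
    intro i
    have := hcmem i
    rw [hA] at this
    have := (Finset.mem_inter.1 (Finset.mem_sdiff.1 this).1).1
    rwa [SimpleGraph.mem_neighborFinset] at this
  have hadjb : ∀ i, G.Adj (b i) (c i) := by
    intro i
    have := hcmem i
    rw [hA] at this
    have := (Finset.mem_inter.1 (Finset.mem_sdiff.1 this).1).2
    rwa [SimpleGraph.mem_neighborFinset] at this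
  have hcnota : ∀ i j, c i ≠ a j := by
    intro i j h
    have := (Finset.mem_sdiff.1 (hA ▸ hcmem i)).2
    exact this (Finset.mem_union.2 (Or.inl (Finset.mem_image.2 ⟨j, Finset.mem_univ _, h.symm⟩)))
  have hcnotb : ∀ i j, c i ≠ b j := by
    intro i j h
    have := (Finset.mem_sdiff.1 (hA ▸ hcmem i)).2
    exact this (Finset.mem_union.2 (Or.inr (Finset.mem_image.2 ⟨j, Finset.mem_univ _, h.symm⟩)))
  -- split off the last index
  obtain ⟨t', rfl⟩ : ∃ t', t = t' + 1 := ⟨t - 1, by omega⟩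
  set T : Fin (t' + 1) := Fin.last t' with hT
  set F : Finset V :=
    Finset.univ.biUnion (fun i : Fin t' => {a i.castSucc, b i.castSucc, c i.castSucc}) with hF
  have hFmem : ∀ v, v ∈ F ↔
      ∃ i : Fin t', v = a i.castSucc ∨ v = b i.castSucc ∨ v = c i.castSucc := by
    intro v
    rw [hF]
    simp [Finset.mem_biUnion]
  have hFcard : F.card ≤ 3 * t' := by
    rw [hF]
    refine le_trans Finset.card_biUnion_le ?_
    refine le_trans (Finset.sum_le_card_nsmul _ _ 3 ?_) (by simp [mul_comm])
    intro i _
    refine le_trans (Finset.card_insert_le _ _) ?_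
    exact Nat.succ_le_succ (le_trans (Finset.card_insert_le _ _) (by simp))
  set s : Finset V := Finset.univ \ F with hs
  have hsmem : ∀ v, v ∈ s ↔ v ∉ F := by
    intro v; rw [hs]; simp
  have hTa : a T ∈ s := by
    rw [hsmem, hFmem]
    rintro ⟨i, h | h | h⟩
    · exact absurd (ha h) (Fin.castSucc_lt_last i).ne'
    · exact hab T i.castSucc h
    · exact hcnota i.castSucc T h.symm
  have hTb : b T ∈ s := by
    rw [hsmem, hFmem]
    rintro ⟨i, h | h | h⟩
    · exact hab i.castSucc T h.symm
    · exact absurd (hbinj h) (Fin.castSucc_lt_last i).ne'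
    · exact hcnotb i.castSucc T h.symm
  -- induced graph
  set G' : SimpleGraph {x // x ∈ s} := G.comap Subtype.val with hG'
  haveI : DecidableRel G'.Adj := fun u v =>
    decidable_of_iff (G.Adj u.val v.val) (by rw [hG', SimpleGraph.comap_adj])
  have hdeg' : ∀ v : {x // x ∈ s}, (G.minDegree - 3*t') ≤ G'.degree v := by
    intro v
    have himg : Finset.image Subtype.val (G'.neighborFinset v) =
        (G.neighborFinset v.val) \ F := by
      ext w
      simp only [Finset.mem_image, SimpleGraph.mem_neighborFinset, Finset.mem_sdiff]
      constructor
      · rintro ⟨u, hu, rfl⟩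
        rw [hG', SimpleGraph.comap_adj] at hu
        exact ⟨hu, ((hsmem u.val).1 u.2)⟩
      · rintro ⟨h1, h2⟩
        refine ⟨⟨w, (hsmem w).2 h2⟩, ?_, rfl⟩
        rw [hG', SimpleGraph.comap_adj]
        exact h1
    have hcardimg : (G'.neighborFinset v).card = ((G.neighborFinset v.val) \ F).card := by
      rw [← himg, Finset.card_image_of_injective _ Subtype.val_injective]
    have h2 : (G.neighborFinset v.val).card ≤
        ((G.neighborFinset v.val) \ F).card + F.card :=
      Finset.card_le_card_sdiff_add_card
    have h3 : G.minDegree ≤ (G.neighborFinset v.val).card := by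
      rw [G.card_neighborFinset_eq_degree]; exact hδdeg _
    have h4 : (G'.neighborFinset v).card = G'.degree v :=
      G'.card_neighborFinset_eq_degree v
    omega
  have hscard : s.card = Fintype.card V - F.card := by
    rw [hs, Finset.card_sdiff_of_subset (Finset.subset_univ F), Finset.card_univ]
  have hcard' : Fintype.card {x // x ∈ s} + 1 < 2*(G.minDegree - 3*t') := by
    rw [Fintype.card_coe, hscard, hcardV]
    omega
  have habT : (⟨a T, hTa⟩ : {x // x ∈ s}) ≠ ⟨b T, hTb⟩ := by
    intro h
    exact hab T T (congrArg Subtype.val h)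
  obtain ⟨l₀, hc₀, hn₀, hh₀, hg₀, hcov₀⟩ :=
    hamilton (G := G') hdeg' hcard' ⟨a T, hTa⟩ ⟨b T, hTb⟩ habT
  set l : List V := l₀.map Subtype.val with hl
  have hcl : l.Chain' G.Adj := by
    rw [hl]; change List.IsChain _ _; rw [List.isChain_map]
    exact List.IsChain.imp (fun x y h => by rw [hG', SimpleGraph.comap_adj] at h; exact h) hc₀
  have hnl : l.Nodup := hn₀.map Subtype.val_injective
  have hhl : l.head? = some (a T) := by rw [hl, List.head?_map, hh₀]; rfl
  have hgl : l.getLast? = some (b T) := by rw [hl, List.getLast?_map, hg₀]; rfl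
  have hmeml : ∀ v : V, v ∈ l ↔ v ∈ s := by
    intro v
    rw [hl]
    constructor
    · intro h
      obtain ⟨u, -, rfl⟩ := List.mem_map.1 h
      exact u.2
    · intro h
      exact List.mem_map.2 ⟨⟨v, h⟩, hcov₀ _, rfl⟩
  obtain ⟨wT, hwT⟩ := walk_of_chain l hcl (a T) (b T) hhl hgl
  refine ⟨fun i => Fin.lastCases wT
    (fun j => SimpleGraph.Walk.cons (hadja j.castSucc)
      (SimpleGraph.Walk.cons (hadjb j.castSucc).symm SimpleGraph.Walk.nil)) i, ?_, ?_, ?_⟩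
  · intro i
    cases i using Fin.lastCases with
    | last =>
      simp only [Fin.lastCases_last]
      rw [SimpleGraph.Walk.isPath_def, hwT]
      exact hnl
    | cast j =>
      simp only [Fin.lastCases_castSucc]
      rw [SimpleGraph.Walk.isPath_def]
      simp only [SimpleGraph.Walk.support_cons, SimpleGraph.Walk.support_nil]
      simp only [List.nodup_cons, List.mem_cons, List.not_mem_nil, or_false,
        List.mem_singleton, List.nodup_nil, and_true]
      refine ⟨?_, ?_, ?_⟩
      · rintro (h | h)
        · exact hcnota j.castSucc j.castSucc h.symm
        · exact hab j.castSucc j.castSucc h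
      · exact fun h => hcnotb j.castSucc j.castSucc h
      · trivial
  · intro i j hij v hvi
    cases i using Fin.lastCases with
    | last =>
      simp only [Fin.lastCases_last] at hvi
      rw [hwT] at hvi
      have hvs : v ∈ s := (hmeml v).1 hvi
      have hvF : v ∉ F := (hsmem v).1 hvs
      cases j using Fin.lastCases with
      | last => exact absurd rfl hij
      | cast j' =>
        simp only [Fin.lastCases_castSucc, SimpleGraph.Walk.support_cons,
          SimpleGraph.Walk.support_nil,
          List.mem_cons, List.not_mem_nil, or_false, List.mem_singleton]
        rintro (rfl | rfl | rfl)
        · exact hvF ((hFmem _).2 ⟨j', Or.inl rfl⟩)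
        · exact hvF ((hFmem _).2 ⟨j', Or.inr (Or.inr rfl)⟩)
        · exact hvF ((hFmem _).2 ⟨j', Or.inr (Or.inl rfl)⟩)
    | cast i' =>
      simp only [Fin.lastCases_castSucc, SimpleGraph.Walk.support_cons,
        SimpleGraph.Walk.support_nil,
        List.mem_cons, List.not_mem_nil, or_false, List.mem_singleton] at hvi
      have hvF : v ∈ F := by
        rw [hFmem]
        rcases hvi with rfl | rfl | rfl
        · exact ⟨i', Or.inl rfl⟩
        · exact ⟨i', Or.inr (Or.inr rfl)⟩
        · exact ⟨i', Or.inr (Or.inl rfl)⟩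
      cases j using Fin.lastCases with
      | last =>
        simp only [Fin.lastCases_last]
        rw [hwT]
        intro h
        exact ((hsmem v).1 ((hmeml v).1 h)) hvF
      | cast j' =>
        have hij' : i' ≠ j' := by
          intro h
          exact hij (by rw [h])
        simp only [Fin.lastCases_castSucc, SimpleGraph.Walk.support_cons,
          SimpleGraph.Walk.support_nil,
          List.mem_cons, List.not_mem_nil, or_false, List.mem_singleton]
        have hai : ∀ x y : Fin t', x ≠ y → a x.castSucc ≠ a y.castSucc :=
          fun x y hxy h => hxy (Fin.castSucc_injective _ (ha h))
        have hbi : ∀ x y : Fin t', x ≠ y → b x.castSucc ≠ b y.castSucc :=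
          fun x y hxy h => hxy (Fin.castSucc_injective _ (hbinj h))
        have hci : ∀ x y : Fin t', x ≠ y → c x.castSucc ≠ c y.castSucc :=
          fun x y hxy h => hxy (Fin.castSucc_injective _ (hcinj h))
        rcases hvi with rfl | rfl | rfl
        · rintro (h | h | h)
          · exact hai i' j' hij' h
          · exact hcnota j'.castSucc i'.castSucc h.symm
          · exact hab i'.castSucc j'.castSucc h
        · rintro (h | h | h)
          · exact hcnota i'.castSucc j'.castSucc h
          · exact hci i' j' hij' h
          · exact hcnotb i'.castSucc j'.castSucc h
        · rintro (h | h | h)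
          · exact hab j'.castSucc i'.castSucc h.symm
          · exact hcnotb j'.castSucc i'.castSucc h.symm
          · exact hbi i' j' hij' h
  · intro v
    by_cases hv : v ∈ s
    · refine ⟨T, ?_⟩
      rw [hT]
      simp only [Fin.lastCases_last]
      rw [hwT]
      exact (hmeml v).2 hv
    · have hvF : v ∈ F := by
        by_contra h
        exact hv ((hsmem v).2 h)
      obtain ⟨i, hcase⟩ := (hFmem v).1 hvF
      refine ⟨i.castSucc, ?_⟩
      simp only [Fin.lastCases_castSucc, SimpleGraph.Walk.support_cons,
        SimpleGraph.Walk.support_nil,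
        List.mem_cons, List.not_mem_nil, or_false, List.mem_singleton]
      rcases hcase with rfl | rfl | rfl
      · exact Or.inl rfl
      · exact Or.inr (Or.inr rfl)
      · exact Or.inr (Or.inl rfl)
end
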